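/- Under Assumption (KŁ with exponent θ ∈ (0,1)): dist(0, −∇_y F(x,y) + N_Y(y)) ≥ μ(max_{y′∈Y} F(x,y′) − F(x,y))^θ for all x ∈ X, y ∈ Y, together with L-weak convexity of F(·,y), L-Lipschitzness of ∇_y F, r > L, and the definitions x_r(y,z) = argmin_{x∈X}{F(x,y)+(r/2)‖x−z‖²}, y₊(z) = proj_Y(y + α∇_y F(x_r(y,z), y)), x_r*(z) = argmin_{x∈X} max_{y∈Y}{F(x,y)+(r/2)‖x−z‖²}: it holds that ‖x_r*(z) − x_r(y₊(z), z)‖ ≤ ω‖y − y₊(z)‖^{1/(2θ)} with ω = (√2/√(r−L))·((1 + αL(1+σ₂))/(αμ))^{1/(2θ)}, σ₂ = 2(r+L)/(r−L). -/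

import Mathlib

open scoped RealInnerProductSpace

set_option maxHeartbeats 1000000

private lemma strong_min_aux {E : Type*} [NormedAddCommGroup E] [InnerProductSpace ℝ E]
    {X : Set E} {g : E → ℝ} {m : ℝ}
    (hsc : StrongConvexOn X m g) {x xs : E} (hx : x ∈ X) (hxs : xs ∈ X)
    (hmin : IsMinOn g X xs) : m / 2 * ‖x - xs‖ ^ 2 ≤ g x - g xs := by
  have key : ∀ t : ℝ, t ∈ Set.Ioo (0:ℝ) 1 →
      (1 - t) * (m / 2 * ‖x - xs‖ ^ 2) ≤ g x - g xs := by
    intro t ht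
    obtain ⟨ht0, ht1⟩ := ht
    have hb0 : (0:ℝ) ≤ 1 - t := by linarith
    have hmem : t • x + (1 - t) • xs ∈ X := hsc.1 hx hxs ht0.le hb0 (by ring)
    have h1 : g xs ≤ g (t • x + (1 - t) • xs) := hmin hmem
    have h2 := hsc.2 hx hxs ht0.le hb0 (by ring)
    simp only [smul_eq_mul] at h2
    have h3 : t * ((1 - t) * (m / 2 * ‖x - xs‖ ^ 2)) ≤ t * (g x - g xs) := by nlinarith
    exact le_of_mul_le_mul_left h3 ht0
  have htend : Filter.Tendsto (fun t : ℝ => (1 - t) * (m / 2 * ‖x - xs‖ ^ 2))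
      (nhdsWithin 0 (Set.Ioi 0)) (nhds (m / 2 * ‖x - xs‖ ^ 2)) := by
    have hcont : Continuous fun t : ℝ => (1 - t) * (m / 2 * ‖x - xs‖ ^ 2) := by continuity
    have h := hcont.tendsto 0
    simp only [sub_zero, one_mul] at h
    exact h.mono_left nhdsWithin_le_nhds
  refine le_of_tendsto htend ?_
  filter_upwards [Ioo_mem_nhdsGT_of_mem (Set.mem_Ico.2 ⟨le_rfl, one_pos⟩)] with t ht
  exact key t ht

private lemma concave_grad_aux {E : Type*} [NormedAddCommGroup E] [InnerProductSpace ℝ E]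
    [CompleteSpace E] {Y : Set E} {f : E → ℝ} {g p q : E}
    (hf : ConcaveOn ℝ Y f) (hp : p ∈ Y) (hq : q ∈ Y)
    (hg : HasGradientAt f g p) : f q - f p ≤ ⟪g, q - p⟫ := by
  have h0 : p + (0:ℝ) • (q - p) = p := by simp
  have hc : HasDerivAt (fun t : ℝ => p + t • (q - p)) (q - p) 0 := by
    simpa using ((hasDerivAt_id (0:ℝ)).smul_const (q - p)).const_add p
  have hγ : HasDerivAt (fun t : ℝ => f (p + t • (q - p))) ⟪g, q - p⟫ 0 := by
    have hfd : HasFDerivAt f (InnerProductSpace.toDual ℝ E g) (p + (0:ℝ) • (q - p)) :=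
      h0.symm ▸ hg.hasFDerivAt
    have h := hfd.comp_hasDerivAt (0:ℝ) hc
    simpa [InnerProductSpace.toDual_apply_apply, Function.comp_def] using h
  rw [hasDerivAt_iff_tendsto_slope] at hγ
  have hγ' : Filter.Tendsto (slope (fun t : ℝ => f (p + t • (q - p))) 0)
      (nhdsWithin 0 (Set.Ioi 0)) (nhds ⟪g, q - p⟫) :=
    hγ.mono_left (nhdsWithin_mono 0 fun t ht => by
      simpa using (ne_of_gt ht))
  refine ge_of_tendsto hγ' ?_
  filter_upwards [Ioo_mem_nhdsGT_of_mem (Set.mem_Ico.2 ⟨le_rfl, one_pos⟩)] with t ht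
  obtain ⟨ht0, ht1⟩ := ht
  have hmix : (1 - t) • p + t • q = p + t • (q - p) := by
    rw [smul_sub, sub_smul, one_smul]; abel
  have hcc := hf.2 hp hq (by linarith : (0:ℝ) ≤ 1 - t) ht0.le (by ring)
  rw [hmix] at hcc
  simp only [smul_eq_mul] at hcc
  rw [slope_def_field]
  rw [h0, sub_zero]
  rw [le_div_iff₀ ht0]
  linarith

/-- Dual error bound with KŁ exponent `θ ∈ (0,1)`:
`‖x_r*(z) - x_r(y₊(z), z)‖ ≤ ω ‖y - y₊(z)‖^{1/(2θ)}` with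
`ω = (√2/√(r-L))·((1 + αL(1+σ₂))/(αμ))^{1/(2θ)}`, `σ₂ = 2(r+L)/(r-L)`. -/
theorem dual_error_bound_KL (n d : ℕ)
    (X : Set (EuclideanSpace ℝ (Fin n))) (Y : Set (EuclideanSpace ℝ (Fin d)))
    (F : EuclideanSpace ℝ (Fin n) → EuclideanSpace ℝ (Fin d) → ℝ)
    (Gy : EuclideanSpace ℝ (Fin n) → EuclideanSpace ℝ (Fin d) → EuclideanSpace ℝ (Fin d))
    (L r α μ θ : ℝ) (z : EuclideanSpace ℝ (Fin n)) (y : EuclideanSpace ℝ (Fin d))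
    (xr : EuclideanSpace ℝ (Fin d) → EuclideanSpace ℝ (Fin n))
    (yplus : EuclideanSpace ℝ (Fin d))
    (xstar : EuclideanSpace ℝ (Fin n))
    (φ Fmax : EuclideanSpace ℝ (Fin n) → ℝ)
    (hX : IsClosed X) (hXc : Convex ℝ X)
    (hYcomp : IsCompact Y) (hYc : Convex ℝ Y)
    (hr : L < r) (hα : 0 < α) (hμ : 0 < μ) (hθ : θ ∈ Set.Ioo (0 : ℝ) 1)
    (hwc : ∀ y' ∈ Y, ConvexOn ℝ X (fun x => F x y' + L / 2 * ‖x‖ ^ 2))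
    (hconc : ∀ x ∈ X, ConcaveOn ℝ Y (fun y' => F x y'))
    (hgrad : ∀ x y', HasGradientAt (F x) (Gy x y') y')
    (hlip : ∀ x x' y' y'', ‖Gy x y' - Gy x' y''‖ ≤
      L * Real.sqrt (‖x - x'‖ ^ 2 + ‖y' - y''‖ ^ 2))
    -- max_{y' ∈ Y} F(x, y') = Fmax x
    (hFmax : ∀ x ∈ X, IsLUB {s | ∃ y' ∈ Y, s = F x y'} (Fmax x))
    -- one-sided Kurdyka–Łojasiewicz condition with exponent θ
    (hKL : ∀ x ∈ X, ∀ y' ∈ Y,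
      μ * (Fmax x - F x y') ^ θ ≤
        Metric.infDist 0
          {u : EuclideanSpace ℝ (Fin d) |
            ∃ v, (∀ w ∈ Y, ⟪v, w - y'⟫ ≤ 0) ∧ u = -Gy x y' + v})
    (hxr : ∀ y' ∈ Y, xr y' ∈ X ∧
      IsMinOn (fun x => F x y' + r / 2 * ‖x - z‖ ^ 2) X (xr y'))
    (hy : y ∈ Y)
    (hyplus : yplus ∈ Y ∧ ∀ w ∈ Y, ⟪y + α • Gy (xr y) y - yplus, w - yplus⟫ ≤ 0)
    (hφ : ∀ x ∈ X, IsLUB {s | ∃ y' ∈ Y, s = F x y' + r / 2 * ‖x - z‖ ^ 2} (φ x))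
    (hxstar : xstar ∈ X ∧ IsMinOn φ X xstar) :
    ‖xstar - xr yplus‖ ≤
      (Real.sqrt 2 / Real.sqrt (r - L)) *
        ((1 + α * L * (1 + 2 * (r + L) / (r - L))) / (α * μ)) ^ (1 / (2 * θ)) *
        ‖y - yplus‖ ^ (1 / (2 * θ)) := by
  obtain ⟨hθ0, hθ1⟩ := hθ
  obtain ⟨hypY, hypIneq⟩ := hyplus
  obtain ⟨hxsX, hxsMin⟩ := hxstar
  obtain ⟨hxhX, hxhMin⟩ := hxr yplus hypY
  obtain ⟨hxyX, hxyMin⟩ := hxr y hy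
  have hm : (0:ℝ) < r - L := by linarith
  by_cases hL : 0 ≤ L
  swap
  · -- degenerate case: spaces are subsingletons
    push_neg at hL
    have hvacx : xstar = xr yplus := by
      have h := hlip xstar (xr yplus) y y
      have h2 : Real.sqrt (‖xstar - xr yplus‖ ^ 2 + ‖y - y‖ ^ 2) = ‖xstar - xr yplus‖ := by
        simp [Real.sqrt_sq (norm_nonneg _)]
      rw [h2] at h
      have h3 : ‖xstar - xr yplus‖ = 0 := by
        nlinarith [norm_nonneg (Gy xstar y - Gy (xr yplus) y), norm_nonneg (xstar - xr yplus)]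
      rwa [norm_sub_eq_zero_iff] at h3
    have hvacy : y = yplus := by
      have h := hlip xstar xstar y yplus
      have h2 : Real.sqrt (‖xstar - xstar‖ ^ 2 + ‖y - yplus‖ ^ 2) = ‖y - yplus‖ := by
        simp [Real.sqrt_sq (norm_nonneg _)]
      rw [h2] at h
      have h3 : ‖y - yplus‖ = 0 := by
        nlinarith [norm_nonneg (Gy xstar y - Gy xstar yplus), norm_nonneg (y - yplus)]
      rwa [norm_sub_eq_zero_iff] at h3
    have hexp : (1:ℝ) / (2 * θ) ≠ 0 := by positivity
    rw [hvacx, sub_self, norm_zero, hvacy, sub_self, norm_zero, Real.zero_rpow hexp, mul_zero]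
  -- main case : 0 ≤ L
  -- Step A: strong convexity of the inner objectives
  have hgsc : ∀ y' ∈ Y, StrongConvexOn X (r - L)
      (fun x => F x y' + r / 2 * ‖x - z‖ ^ 2) := by
    intro y' hy'
    rw [strongConvexOn_iff_convex]
    have h2 : ConvexOn ℝ X
        (fun x : EuclideanSpace ℝ (Fin n) => -(r * ⟪x, z⟫) + r / 2 * ‖z‖ ^ 2) := by
      refine ⟨hXc, fun p hp q hq a b ha hb hab => le_of_eq ?_⟩
      simp only [inner_add_left, real_inner_smul_left, smul_eq_mul]
      linear_combination (-(r / 2 * ‖z‖ ^ 2)) * hab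
    have h3 := (hwc y' hy').add h2
    have heq : ((fun x => F x y' + L / 2 * ‖x‖ ^ 2) +
        (fun x : EuclideanSpace ℝ (Fin n) => -(r * ⟪x, z⟫) + r / 2 * ‖z‖ ^ 2))
        = fun x => (F x y' + r / 2 * ‖x - z‖ ^ 2) - (r - L) / 2 * ‖x‖ ^ 2 := by
      funext x
      simp only [Pi.add_apply]
      rw [norm_sub_sq_real]
      ring
    rwa [heq] at h3
  -- Step B: strong convexity of φ
  have hφsc : StrongConvexOn X (r - L) φ := by
    refine ⟨hXc, fun p hp q hq a b ha hb hab => ?_⟩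
    have hmem : a • p + b • q ∈ X := hXc hp hq ha hb hab
    refine (hφ _ hmem).2 ?_
    rintro s ⟨y', hy', rfl⟩
    have h1 := (hgsc y' hy').2 hp hq ha hb hab
    have h2 : F p y' + r / 2 * ‖p - z‖ ^ 2 ≤ φ p := (hφ p hp).1 ⟨y', hy', rfl⟩
    have h3 : F q y' + r / 2 * ‖q - z‖ ^ 2 ≤ φ q := (hφ q hq).1 ⟨y', hy', rfl⟩
    simp only [smul_eq_mul] at h1 ⊢
    linarith [mul_le_mul_of_nonneg_left h2 ha, mul_le_mul_of_nonneg_left h3 hb]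
  -- abbreviations
  set D : ℝ := ‖y - yplus‖ with hD
  set Dx : ℝ := ‖xr y - xr yplus‖ with hDx
  have hD0 : 0 ≤ D := norm_nonneg _
  have hDx0 : 0 ≤ Dx := norm_nonneg _
  -- Step D: value of φ at xr yplus, weak duality
  have hφxh : φ (xr yplus) = Fmax (xr yplus) + r / 2 * ‖xr yplus - z‖ ^ 2 := by
    refine (hφ _ hxhX).unique ?_
    constructor
    · rintro s ⟨y', hy', rfl⟩
      have h := (hFmax _ hxhX).1 ⟨y', hy', rfl⟩
      linarith
    · intro b hb
      have h : Fmax (xr yplus) ≤ b - r / 2 * ‖xr yplus - z‖ ^ 2 := by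
        refine (hFmax _ hxhX).2 ?_
        rintro s ⟨y', hy', rfl⟩
        have := hb ⟨y', hy', rfl⟩
        linarith
      linarith
  set gap : ℝ := Fmax (xr yplus) - F (xr yplus) yplus with hgapdef
  have hgap0 : 0 ≤ gap := by
    have := (hFmax _ hxhX).1 ⟨yplus, hypY, rfl⟩
    simp only [hgapdef]; linarith
  -- strong convexity bound on ‖xstar - xr yplus‖
  have hC1 := strong_min_aux hφsc hxhX hxsX hxsMin
  have hφxs_ge : F (xr yplus) yplus + r / 2 * ‖xr yplus - z‖ ^ 2 ≤ φ xstar := by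
    have h1 : F (xr yplus) yplus + r / 2 * ‖xr yplus - z‖ ^ 2 ≤
        F xstar yplus + r / 2 * ‖xstar - z‖ ^ 2 := hxhMin hxsX
    have h2 : F xstar yplus + r / 2 * ‖xstar - z‖ ^ 2 ≤ φ xstar :=
      (hφ xstar hxsX).1 ⟨yplus, hypY, rfl⟩
    linarith
  have hNsq : (r - L) / 2 * ‖xstar - xr yplus‖ ^ 2 ≤ gap := by
    rw [norm_sub_rev]
    have := hC1
    rw [hφxh] at this
    simp only [hgapdef]
    linarith
  set σ : ℝ := 2 * (r + L) / (r - L) with hσdef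
  have hσ0 : 0 ≤ σ := by
    rw [hσdef]; exact div_nonneg (by linarith) (by linarith)
  -- Step F: Lipschitz bound on Dx
  have hC2 := strong_min_aux (hgsc y hy) hxhX hxyX hxyMin
  have hC3 := strong_min_aux (hgsc yplus hypY) hxyX hxhX hxhMin
  have hcg1 : F (xr yplus) y - F (xr yplus) yplus ≤ ⟪Gy (xr yplus) yplus, y - yplus⟫ :=
    concave_grad_aux (hconc _ hxhX) hypY hy (hgrad (xr yplus) yplus)
  have hcg2 : F (xr y) yplus - F (xr y) y ≤ ⟪Gy (xr y) y, yplus - y⟫ :=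
    concave_grad_aux (hconc _ hxyX) hy hypY (hgrad (xr y) y)
  have hinner : ⟪Gy (xr yplus) yplus, y - yplus⟫ + ⟪Gy (xr y) y, yplus - y⟫
      = ⟪Gy (xr yplus) yplus - Gy (xr y) y, y - yplus⟫ := by
    rw [inner_sub_left, show yplus - y = -(y - yplus) by abel, inner_neg_right]
    ring
  have hsqrt_le : ∀ a b : ℝ, 0 ≤ a → 0 ≤ b → Real.sqrt (a ^ 2 + b ^ 2) ≤ a + b := by
    intro a b ha hb
    calc Real.sqrt (a ^ 2 + b ^ 2) ≤ Real.sqrt ((a + b) ^ 2) :=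
          Real.sqrt_le_sqrt (by nlinarith)
      _ = a + b := Real.sqrt_sq (by linarith)
  have hGlip : ‖Gy (xr yplus) yplus - Gy (xr y) y‖ ≤ L * (Dx + D) := by
    have h := hlip (xr yplus) (xr y) yplus y
    have h2 : ‖xr yplus - xr y‖ = Dx := norm_sub_rev _ _
    have h3 : ‖yplus - y‖ = D := norm_sub_rev _ _
    rw [h2, h3] at h
    calc ‖Gy (xr yplus) yplus - Gy (xr y) y‖ ≤ L * Real.sqrt (Dx ^ 2 + D ^ 2) := h
      _ ≤ L * (Dx + D) := by
          exact mul_le_mul_of_nonneg_left (hsqrt_le _ _ hDx0 hD0) hL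
  have hquad : (r - L) * Dx ^ 2 ≤ L * (Dx + D) * D := by
    have hnormrev : ‖xr yplus - xr y‖ = Dx := norm_sub_rev _ _
    have hsum : (r - L) * Dx ^ 2 ≤
        (F (xr yplus) y - F (xr yplus) yplus) + (F (xr y) yplus - F (xr y) y) := by
      have e2 : (r - L) / 2 * ‖xr yplus - xr y‖ ^ 2 ≤
          (F (xr yplus) y + r / 2 * ‖xr yplus - z‖ ^ 2) -
            (F (xr y) y + r / 2 * ‖xr y - z‖ ^ 2) := hC2
      have e3 : (r - L) / 2 * ‖xr y - xr yplus‖ ^ 2 ≤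
          (F (xr y) yplus + r / 2 * ‖xr y - z‖ ^ 2) -
            (F (xr yplus) yplus + r / 2 * ‖xr yplus - z‖ ^ 2) := hC3
      rw [hnormrev] at e2
      linarith [e2, e3]
    have hin : (F (xr yplus) y - F (xr yplus) yplus) + (F (xr y) yplus - F (xr y) y)
        ≤ ‖Gy (xr yplus) yplus - Gy (xr y) y‖ * D := by
      calc _ ≤ ⟪Gy (xr yplus) yplus, y - yplus⟫ + ⟪Gy (xr y) y, yplus - y⟫ := by
            linarith
        _ = ⟪Gy (xr yplus) yplus - Gy (xr y) y, y - yplus⟫ := hinner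
        _ ≤ ‖Gy (xr yplus) yplus - Gy (xr y) y‖ * D := real_inner_le_norm _ _
    have hfin := mul_le_mul_of_nonneg_right hGlip hD0
    linarith [hsum, hin, hfin]
  have hDxD : Dx ≤ σ * D := by
    rw [hσdef, div_mul_eq_mul_div, le_div_iff₀ hm]
    by_contra hcon
    push_neg at hcon
    have hDxpos : 0 < Dx := by nlinarith [mul_nonneg (by linarith : (0:ℝ) ≤ 2 * (r + L)) hD0]
    have h1 : 2 * (r + L) * D * Dx < Dx * (r - L) * Dx := mul_lt_mul_of_pos_right hcon hDxpos
    have h2 : 2 * (r + L) * D * D ≤ Dx * (r - L) * D := mul_le_mul_of_nonneg_right hcon.le hD0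
    nlinarith [hquad, h1, h2, mul_nonneg hD0 hDx0, mul_nonneg hD0 hD0,
      mul_pos hDxpos hDxpos, mul_nonneg (mul_nonneg hL hD0) hDx0]
  -- Step G: KL bound
  have hKLbound : μ * gap ^ θ ≤ (L * (1 + σ) + α⁻¹) * D := by
    have hkl := hKL (xr yplus) hxhX yplus hypY
    set vv : EuclideanSpace ℝ (Fin d) := α⁻¹ • (y + α • Gy (xr y) y - yplus) with hvv
    have hvineq : ∀ w ∈ Y, ⟪vv, w - yplus⟫ ≤ 0 := by
      intro w hw
      rw [hvv, real_inner_smul_left]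
      have h1 := hypIneq w hw
      have h2 : (0:ℝ) ≤ α⁻¹ := by positivity
      nlinarith
    have hmemS : -Gy (xr yplus) yplus + vv ∈
        {u : EuclideanSpace ℝ (Fin d) |
          ∃ v, (∀ w ∈ Y, ⟪v, w - yplus⟫ ≤ 0) ∧ u = -Gy (xr yplus) yplus + v} :=
      ⟨vv, hvineq, rfl⟩
    have hdist := Metric.infDist_le_dist_of_mem (x := (0 : EuclideanSpace ℝ (Fin d))) hmemS
    rw [dist_zero_left] at hdist
    have hαα : α⁻¹ • (α • Gy (xr y) y) = Gy (xr y) y := by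
      rw [smul_smul, inv_mul_cancel₀ hα.ne', one_smul]
    have hu : -Gy (xr yplus) yplus + vv =
        (Gy (xr y) y - Gy (xr yplus) yplus) + α⁻¹ • (y - yplus) := by
      rw [hvv, show y + α • Gy (xr y) y - yplus = (y - yplus) + α • Gy (xr y) y by abel,
        smul_add, hαα]
      abel
    have hnorm : ‖-Gy (xr yplus) yplus + vv‖ ≤ ‖Gy (xr y) y - Gy (xr yplus) yplus‖ + α⁻¹ * D := by
      rw [hu]
      calc ‖(Gy (xr y) y - Gy (xr yplus) yplus) + α⁻¹ • (y - yplus)‖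
          ≤ ‖Gy (xr y) y - Gy (xr yplus) yplus‖ + ‖α⁻¹ • (y - yplus)‖ := norm_add_le _ _
        _ = ‖Gy (xr y) y - Gy (xr yplus) yplus‖ + α⁻¹ * D := by
            rw [norm_smul, Real.norm_eq_abs, abs_of_nonneg (by positivity : (0:ℝ) ≤ α⁻¹)]
    have hGlip' : ‖Gy (xr y) y - Gy (xr yplus) yplus‖ ≤ L * (Dx + D) := by
      rw [norm_sub_rev]; exact hGlip
    have hchain : μ * gap ^ θ ≤ L * (Dx + D) + α⁻¹ * D := by
      calc μ * gap ^ θ ≤ _ := hkl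
        _ ≤ ‖-Gy (xr yplus) yplus + vv‖ := hdist
        _ ≤ ‖Gy (xr y) y - Gy (xr yplus) yplus‖ + α⁻¹ * D := hnorm
        _ ≤ L * (Dx + D) + α⁻¹ * D := by linarith [hGlip']
    linarith [hchain, mul_le_mul_of_nonneg_left hDxD hL]
  -- Step H: final computation
  set B : ℝ := (1 + α * L * (1 + σ)) / (α * μ) with hBdef
  have hB0 : 0 ≤ B := by
    rw [hBdef]
    apply div_nonneg _ (by positivity)
    have : 0 ≤ α * L * (1 + σ) := mul_nonneg (mul_nonneg hα.le hL) (by linarith)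
    linarith
  have hkey : gap ^ θ ≤ B * D := by
    have h1 : μ * gap ^ θ ≤ μ * (B * D) := by
      have heq : μ * (B * D) = (L * (1 + σ) + α⁻¹) * D := by
        rw [hBdef]
        field_simp
        ring
      rw [heq]
      exact hKLbound
    exact le_of_mul_le_mul_left h1 hμ
  have hBD0 : 0 ≤ B * D := mul_nonneg hB0 hD0
  have hgapB : gap ≤ (B * D) ^ θ⁻¹ := by
    have h1 : gap = (gap ^ θ) ^ θ⁻¹ := (Real.rpow_rpow_inv hgap0 hθ0.ne').symm
    rw [h1]
    exact Real.rpow_le_rpow (Real.rpow_nonneg hgap0 θ) hkey (by positivity)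
  have hN2 : ‖xstar - xr yplus‖ ^ 2 ≤ 2 / (r - L) * ((B * D) ^ θ⁻¹) := by
    have h1 : ‖xstar - xr yplus‖ ^ 2 ≤ 2 / (r - L) * gap := by
      rw [div_mul_eq_mul_div, le_div_iff₀ hm]
      nlinarith [hNsq]
    have h2 : 2 / (r - L) * gap ≤ 2 / (r - L) * ((B * D) ^ θ⁻¹) :=
      mul_le_mul_of_nonneg_left hgapB (by positivity)
    linarith
  have hNle : ‖xstar - xr yplus‖ ≤ Real.sqrt (2 / (r - L) * ((B * D) ^ θ⁻¹)) := by
    have := Real.sqrt_le_sqrt hN2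
    rwa [Real.sqrt_sq (norm_nonneg _)] at this
  have hrhs : Real.sqrt (2 / (r - L) * ((B * D) ^ θ⁻¹)) =
      Real.sqrt 2 / Real.sqrt (r - L) * B ^ (1 / (2 * θ)) * D ^ (1 / (2 * θ)) := by
    rw [Real.sqrt_mul (div_nonneg (by norm_num) hm.le) _,
      Real.sqrt_div (by norm_num : (0:ℝ) ≤ 2) _]
    have hhalf : Real.sqrt ((B * D) ^ θ⁻¹) = ((B * D) ^ θ⁻¹) ^ ((1:ℝ)/2) :=
      Real.sqrt_eq_rpow _
    rw [hhalf, ← Real.rpow_mul hBD0, show θ⁻¹ * ((1:ℝ)/2) = 1 / (2 * θ) by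
      rw [one_div, one_div, mul_inv]; ring]
    rw [Real.mul_rpow hB0 hD0]
    ring
  calc ‖xstar - xr yplus‖ ≤ Real.sqrt (2 / (r - L) * ((B * D) ^ θ⁻¹)) := hNle
    _ = Real.sqrt 2 / Real.sqrt (r - L) * B ^ (1 / (2 * θ)) * D ^ (1 / (2 * θ)) := hrhs
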